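/- For every positive integer n, ASM(2n) = 2 · R(2n) · VSASM(2n+1), i.e., ∏_{i=0}^{2n-1} (3i+1)!/(2n+i)! = 2 · [∏_{i=0}^{n-1} (6i+1)!/(2n+2i-1)!] · [∏_{i=1}^{n} (6i-2)!/(2n+2i)!]. -/

import Mathlib

lemma prod_range_two_mul' {M : Type*} [CommMonoid M] (f : ℕ → M) (n : ℕ) :
    ∏ i ∈ Finset.range (2 * n), f i
      = (∏ j ∈ Finset.range n, f (2 * j)) * ∏ j ∈ Finset.range n, f (2 * j + 1) := by
  induction n with
  | zero => simp
  | succ n ih =>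
    have h : 2 * (n + 1) = (2 * n + 1) + 1 := by ring
    rw [h, Finset.prod_range_succ, Finset.prod_range_succ, Finset.prod_range_succ,
      Finset.prod_range_succ, ih]
    rw [mul_assoc, mul_mul_mul_comm]

lemma div_fact_succ (F : ℚ) (b : ℕ) :
    F / (Nat.factorial b : ℚ) = F / (((b:ℚ)+1) * (Nat.factorial b : ℚ)) * ((b:ℚ)+1) := by
  have hfe : ((Nat.factorial b : ℚ)) ≠ 0 := by exact_mod_cast (Nat.factorial_pos _).ne'
  have hne : ((b : ℚ) + 1) ≠ 0 := by positivity
  field_simp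

lemma div_fact_succ' (F : ℚ) (a : ℕ) :
    F / (((a:ℚ)+1) * (Nat.factorial a : ℚ)) = F / (Nat.factorial a : ℚ) * (1 / ((a:ℚ)+1)) := by
  have hfe : ((Nat.factorial a : ℚ)) ≠ 0 := by exact_mod_cast (Nat.factorial_pos _).ne'
  have hne : ((a : ℚ) + 1) ≠ 0 := by positivity
  field_simp

lemma telescope (m k : ℕ) (hk : 0 < k) :
    ∏ j ∈ Finset.range m, (((k : ℚ) + 2 * j + 2) / ((k : ℚ) + 2 * j))
      = ((k : ℚ) + 2 * m) / k := by
  have h1 : (k : ℚ) ≠ 0 := by positivity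
  induction m with
  | zero => simp [div_self h1]
  | succ m ih =>
    rw [Finset.prod_range_succ, ih]
    have h2 : (k : ℚ) + 2 * m ≠ 0 := by positivity
    push_cast
    field_simp
    ring

/-- ASM(2n) = 2 · R(2n) · VSASM(2n+1), as an identity of rational products
(indices shifted to start at 0). -/
theorem ASM_even_eq_two_mul_R_mul_VSASM (n : ℕ) (hn : 0 < n) :
    (∏ i ∈ Finset.range (2 * n),
        ((Nat.factorial (3 * i + 1) : ℚ) / Nat.factorial (2 * n + i)))
    = 2 * (∏ i ∈ Finset.range n,
        ((Nat.factorial (6 * i + 1) : ℚ) / Nat.factorial (2 * n + 2 * i - 1)))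
      * (∏ i ∈ Finset.range n,
        ((Nat.factorial (6 * i + 4) : ℚ) / Nat.factorial (2 * n + 2 * i + 2))) := by
  rw [prod_range_two_mul']
  have heven : ∀ j ∈ Finset.range n,
      ((Nat.factorial (3 * (2 * j) + 1) : ℚ) / Nat.factorial (2 * n + 2 * j))
        = ((Nat.factorial (6 * j + 1) : ℚ) / Nat.factorial (2 * n + 2 * j - 1))
            * (1 / ((2 * n + 2 * j : ℕ) : ℚ)) := by
    intro j _
    have h3 : 3 * (2 * j) + 1 = 6 * j + 1 := by ring
    rw [h3]
    have h : 2 * n + 2 * j = (2 * n + 2 * j - 1) + 1 := by omega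
    generalize ha : 2 * n + 2 * j - 1 = a
    rw [ha] at h
    rw [h, Nat.factorial_succ a, Nat.cast_mul, Nat.cast_add, Nat.cast_one]
    exact div_fact_succ' _ a
  have hodd : ∀ j ∈ Finset.range n,
      ((Nat.factorial (3 * (2 * j + 1) + 1) : ℚ) / Nat.factorial (2 * n + (2 * j + 1)))
        = ((Nat.factorial (6 * j + 4) : ℚ) / Nat.factorial (2 * n + 2 * j + 2))
            * ((2 * n + 2 * j + 2 : ℕ) : ℚ) := by
    intro j _
    have h3 : 3 * (2 * j + 1) + 1 = 6 * j + 4 := by ring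
    rw [h3]
    generalize hb : 2 * n + (2 * j + 1) = b
    have h : 2 * n + 2 * j + 2 = b + 1 := by omega
    rw [h, Nat.factorial_succ b, Nat.cast_mul, Nat.cast_add, Nat.cast_one]
    exact div_fact_succ _ b
  rw [Finset.prod_congr rfl heven, Finset.prod_congr rfl hodd,
    Finset.prod_mul_distrib, Finset.prod_mul_distrib]
  have htel : (∏ j ∈ Finset.range n, (1 / ((2 * n + 2 * j : ℕ) : ℚ)))
      * ∏ j ∈ Finset.range n, ((2 * n + 2 * j + 2 : ℕ) : ℚ) = 2 := by
    rw [← Finset.prod_mul_distrib]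
    have hc : ∀ j ∈ Finset.range n,
        (1 / ((2 * n + 2 * j : ℕ) : ℚ)) * ((2 * n + 2 * j + 2 : ℕ) : ℚ)
          = (((2 * n : ℕ) : ℚ) + 2 * j + 2) / (((2 * n : ℕ) : ℚ) + 2 * j) := by
      intro j _
      push_cast
      ring
    rw [Finset.prod_congr rfl hc, telescope n (2 * n) (by omega)]
    have h1 : ((2 * n : ℕ) : ℚ) ≠ 0 := by
      have : (0 : ℚ) < ((2 * n : ℕ) : ℚ) := by exact_mod_cast Nat.mul_pos (by norm_num) hn
      exact this.ne'
    push_cast at h1 ⊢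
    field_simp
    ring
  rw [mul_mul_mul_comm, htel]
  ring
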